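/- (Linear convergence of the projected gradient method for a constrained quadratic program.) Let H ∈ ℝ^{d×d} be symmetric and let 0 < m ≤ Λ be constants with m‖v‖² ≤ vᵀHv ≤ Λ‖v‖² for all v ∈ ℝ^d. Let N ⊆ ℝ^d be a nonempty, closed, convex set, let b ∈ ℝ^d, and let ν* be the (unique) minimizer over N of the strongly convex quadratic q(ν) := νᵀHν + 2bᵀν. Define the projected gradient operator T(ν) := Π_N[ν − α(2Hν + 2b)] with step size α := 1/(Λ + m), where Π_N is the metric projection onto N and 2Hν + 2b is the gradient of q at ν. Then for every ν ∈ ℝ^d and every number of iterations ℓ ∈ ℕ, ‖T^ℓ(ν) − ν*‖ ≤ η^ℓ ‖ν − ν*‖, where η := (Λ − m)/(Λ + m) and T^ℓ denotes the ℓ-fold composition of T (T⁰(ν) = ν). -/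

import Mathlib

open scoped RealInnerProductSpace

set_option maxHeartbeats 1000000

lemma pgm_aux_small (a c : ℝ) (hc : 0 ≤ c)
    (h : ∀ t : ℝ, 0 < t → t ≤ 1 → 0 ≤ 2 * (t * a) + t ^ 2 * c) : 0 ≤ a := by
  by_contra hneg
  push_neg at hneg
  set t : ℝ := min 1 (-a / (c + 1)) with ht
  have hc1 : (0:ℝ) < c + 1 := by linarith
  have ht0 : 0 < t := lt_min one_pos (div_pos (by linarith) hc1)
  have ht1 : t ≤ 1 := min_le_left _ _
  have ht2 : t ≤ -a / (c + 1) := min_le_right _ _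
  have ht3 : t * (c + 1) ≤ -a := by
    rw [div_eq_mul_inv] at ht2
    calc t * (c+1) ≤ (-a * (c+1)⁻¹) * (c+1) := by nlinarith
    _ = -a := by field_simp
  have := h t ht0 ht1
  nlinarith [sq_nonneg t, mul_pos ht0 ht0]


/-- Linear convergence of the projected gradient method for a constrained
quadratic program (Theorem 10). -/
theorem pgm_linear_convergence
    (d : ℕ) (H : Matrix (Fin d) (Fin d) ℝ) (hHsymm : H.IsSymm)
    (m Λ : ℝ) (hm : 0 < m) (hmΛ : m ≤ Λ)
    (hH : ∀ v : EuclideanSpace ℝ (Fin d),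
      m * ‖v‖ ^ 2 ≤ ⟪v, Matrix.toEuclideanCLM (𝕜 := ℝ) H v⟫ ∧
      ⟪v, Matrix.toEuclideanCLM (𝕜 := ℝ) H v⟫ ≤ Λ * ‖v‖ ^ 2)
    (N : Set (EuclideanSpace ℝ (Fin d)))
    (hNne : N.Nonempty) (hNclosed : IsClosed N) (hNconvex : Convex ℝ N)
    (b : EuclideanSpace ℝ (Fin d))
    -- `proj` is the metric projection onto `N`
    (proj : EuclideanSpace ℝ (Fin d) → EuclideanSpace ℝ (Fin d))
    (hproj : ∀ z, proj z ∈ N ∧ ∀ y ∈ N, ‖z - proj z‖ ≤ ‖z - y‖)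
    -- `νs` is the minimizer of `q(ν) = νᵀHν + 2bᵀν` over `N`
    (νs : EuclideanSpace ℝ (Fin d)) (hνsN : νs ∈ N)
    (hνsmin : ∀ ν ∈ N,
      ⟪νs, Matrix.toEuclideanCLM (𝕜 := ℝ) H νs⟫ + 2 * ⟪b, νs⟫ ≤
      ⟪ν, Matrix.toEuclideanCLM (𝕜 := ℝ) H ν⟫ + 2 * ⟪b, ν⟫)
    -- `T` is the projected gradient operator with step size `α = 1/(Λ + m)`
    (T : EuclideanSpace ℝ (Fin d) → EuclideanSpace ℝ (Fin d))
    (hT : ∀ ν, T ν =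
      proj (ν - (1 / (Λ + m)) •
        ((2 : ℝ) • Matrix.toEuclideanCLM (𝕜 := ℝ) H ν + (2 : ℝ) • b))) :
    ∀ (ν : EuclideanSpace ℝ (Fin d)) (ℓ : ℕ),
      ‖T^[ℓ] ν - νs‖ ≤ ((Λ - m) / (Λ + m)) ^ ℓ * ‖ν - νs‖ := by
  set A := Matrix.toEuclideanCLM (𝕜 := ℝ) H with hAdef
  have hΛm : (0:ℝ) < Λ + m := by linarith
  set η : ℝ := (Λ - m) / (Λ + m) with hηdef
  have hη0 : 0 ≤ η := div_nonneg (by linarith) hΛm.le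
  -- self-adjointness
  have hsa : ∀ x y : EuclideanSpace ℝ (Fin d), ⟪A x, y⟫ = ⟪x, A y⟫ := by
    have hherm : H.IsHermitian := by
      rwa [Matrix.IsHermitian, Matrix.conjTranspose_eq_transpose_of_trivial]
    have := Matrix.isHermitian_iff_isSymmetric.mp hherm
    intro x y
    have h2 := this x y
    rwa [← Matrix.coe_toEuclideanCLM_eq_toEuclideanLin] at h2
  -- variational inequality for proj
  have hVIproj : ∀ z, ∀ w ∈ N, ⟪z - proj z, w - proj z⟫ ≤ 0 := by
    intro z w hw
    have hpz := (hproj z).1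
    rw [← neg_nonneg]
    apply pgm_aux_small _ (‖w - proj z‖^2) (by positivity)
    intro t ht0 ht1
    have hmem : proj z + t • (w - proj z) ∈ N := by
      have := hNconvex hpz hw (a := 1 - t) (b := t) (by linarith) ht0.le (by ring)
      convert this using 1
      module
    have hle := (hproj z).2 _ hmem
    have hsq : ‖z - proj z‖^2 ≤ ‖z - (proj z + t • (w - proj z))‖^2 := by
      have := norm_nonneg (z - proj z)
      nlinarith
    have hexp : ‖z - (proj z + t • (w - proj z))‖^2
        = ‖z - proj z‖^2 - 2 * (t * ⟪z - proj z, w - proj z⟫) + t^2 * ‖w - proj z‖^2 := by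
      have : z - (proj z + t • (w - proj z)) = (z - proj z) - t • (w - proj z) := by module
      rw [this, norm_sub_sq_real, norm_smul, real_inner_smul_right, Real.norm_eq_abs,
        mul_pow, sq_abs]
    rw [hexp] at hsq
    have hgoal : 2 * (t * -⟪z - proj z, w - proj z⟫) + t ^ 2 * ‖w - proj z‖ ^ 2
        = -(2 * (t * ⟪z - proj z, w - proj z⟫)) + t ^ 2 * ‖w - proj z‖ ^ 2 := by ring
    rw [hgoal]
    linarith
  -- nonexpansiveness of proj
  have hne : ∀ x y, ‖proj x - proj y‖ ≤ ‖x - y‖ := by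
    intro x y
    have h1 := hVIproj x (proj y) (hproj y).1
    have h2 := hVIproj y (proj x) (hproj x).1
    have key : ‖proj x - proj y‖^2 ≤ ⟪x - y, proj x - proj y⟫ := by
      have e1 : ⟪y - proj y, proj x - proj y⟫ = - ⟪proj y - y, proj x - proj y⟫ := by
        rw [← inner_neg_left]; congr 1; module
      have e2 : ⟪x - proj x, proj y - proj x⟫
          = - ⟪x - proj x, proj x - proj y⟫ := by
        rw [← inner_neg_right]; congr 1; module
      have e3 : ⟪x - y, proj x - proj y⟫
          = ⟪x - proj x, proj x - proj y⟫ + ⟪proj x - proj y, proj x - proj y⟫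
            + ⟪proj y - y, proj x - proj y⟫ := by
        rw [← inner_add_left, ← inner_add_left]; congr 1; module
      rw [e3, real_inner_self_eq_norm_sq]
      rw [e2] at h1
      rw [e1] at h2
      linarith
    have hcs := real_inner_le_norm (x - y) (proj x - proj y)
    have hn := norm_nonneg (proj x - proj y)
    nlinarith [norm_nonneg (x - y)]
  -- variational inequality at the minimizer
  have hVIν : ∀ w ∈ N, 0 ≤ ⟪A νs + b, w - νs⟫ := by
    intro w hw
    apply pgm_aux_small _ ⟪w - νs, A (w - νs)⟫ (by nlinarith [(hH (w - νs)).1, sq_nonneg ‖w - νs‖])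
    intro t ht0 ht1
    have hmem : νs + t • (w - νs) ∈ N := by
      have := hNconvex hνsN hw (a := 1 - t) (b := t) (by linarith) ht0.le (by ring)
      convert this using 1
      module
    have hle := hνsmin _ hmem
    have hexp : ⟪νs + t • (w - νs), A (νs + t • (w - νs))⟫ + 2 * ⟪b, νs + t • (w - νs)⟫
        = (⟪νs, A νs⟫ + 2 * ⟪b, νs⟫) + 2 * (t * ⟪A νs + b, w - νs⟫)
          + t^2 * ⟪w - νs, A (w - νs)⟫ := by
      have hlin : A (νs + t • (w - νs)) = A νs + t • A (w - νs) := by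
        rw [map_add, map_smul]
      rw [hlin]
      simp only [inner_add_left, inner_add_right, real_inner_smul_left, real_inner_smul_right,
        inner_add_left]
      have hc1 : ⟪w - νs, A νs⟫ = ⟪νs, A (w - νs)⟫ :=
        (real_inner_comm (A νs) (w - νs)).trans (hsa νs (w - νs))
      have hc2 : ⟪A νs, w - νs⟫ = ⟪νs, A (w - νs)⟫ := hsa νs (w - νs)
      simp only [hc1, hc2]
      ring
    rw [hexp] at hle
    linarith
  -- fixed point
  have hfix : proj (νs - (1 / (Λ + m)) • ((2:ℝ) • A νs + (2:ℝ) • b)) = νs := by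
    set z := νs - (1 / (Λ + m)) • ((2:ℝ) • A νs + (2:ℝ) • b) with hz
    have h1 : ⟪z - proj z, νs - proj z⟫ ≤ 0 := hVIproj z νs hνsN
    have h2 : ⟪z - νs, proj z - νs⟫ ≤ 0 := by
      have hz2 : z - νs = -(2 / (Λ + m)) • (A νs + b) := by
        rw [hz]; module
      rw [hz2, real_inner_smul_left]
      have := hVIν (proj z) (hproj z).1
      have hpos : (0:ℝ) < 2 / (Λ + m) := by positivity
      nlinarith
    have e : ⟪z - proj z, νs - proj z⟫ + ⟪z - νs, proj z - νs⟫ = ‖νs - proj z‖^2 := by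
      have : ⟪z - νs, proj z - νs⟫ = - ⟪z - νs, νs - proj z⟫ := by
        rw [← inner_neg_right]; congr 1; module
      rw [this, ← real_inner_self_eq_norm_sq, ← sub_eq_add_neg, ← inner_sub_left]
      congr 1; module
    have : ‖νs - proj z‖^2 ≤ 0 := by linarith
    have : νs - proj z = 0 := by
      have hn := norm_nonneg (νs - proj z)
      have : ‖νs - proj z‖ = 0 := by nlinarith
      exact norm_eq_zero.mp this
    have : proj z = νs := by
      have := sub_eq_zero.mp this
      exact this.symm
    exact this
  -- contraction of the shifted gradient map
  have hS : ∀ v : EuclideanSpace ℝ (Fin d),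
      ‖v - (2 / (Λ + m)) • A v‖ ≤ η * ‖v‖ := by
    intro v
    set S : EuclideanSpace ℝ (Fin d) → EuclideanSpace ℝ (Fin d) :=
      fun w => w - (2 / (Λ + m)) • A w with hSdef
    have hSlin : ∀ (x y : EuclideanSpace ℝ (Fin d)) (t : ℝ), S (x + t • y) = S x + t • S y := by
      intro x y t
      simp only [hSdef, map_add, map_smul]
      module
    have hquad : ∀ w, |⟪w, S w⟫| ≤ η * ‖w‖^2 := by
      intro w
      have h1 := (hH w).1
      have h2 := (hH w).2
      have he : ⟪w, S w⟫ = ‖w‖^2 - (2/(Λ+m)) * ⟪w, A w⟫ := by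
        simp only [hSdef, inner_sub_right, real_inner_smul_right, real_inner_self_eq_norm_sq]
      rw [abs_le, he]
      have hΛm' : (Λ + m) ≠ 0 := ne_of_gt hΛm
      constructor
      · have key : (‖w‖^2 - 2/(Λ+m) * ⟪w, A w⟫) + η * ‖w‖^2
            = (2 * Λ * ‖w‖^2 - 2 * ⟪w, A w⟫) / (Λ + m) := by
          rw [hηdef]; field_simp; ring
        have hnum : 0 ≤ (2 * Λ * ‖w‖^2 - 2 * ⟪w, A w⟫) / (Λ + m) :=
          div_nonneg (by linarith) hΛm.le
        linarith
      · have key : η * ‖w‖^2 - (‖w‖^2 - 2/(Λ+m) * ⟪w, A w⟫)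
            = (2 * ⟪w, A w⟫ - 2 * m * ‖w‖^2) / (Λ + m) := by
          rw [hηdef]; field_simp; ring
        have hnum : 0 ≤ (2 * ⟪w, A w⟫ - 2 * m * ‖w‖^2) / (Λ + m) :=
          div_nonneg (by linarith) hΛm.le
        linarith
    have hSsym : ∀ x y, ⟪y, S x⟫ = ⟪x, S y⟫ := by
      intro x y
      simp only [hSdef, inner_sub_right, real_inner_smul_right]
      have h1 : ⟪y, A x⟫ = ⟪x, A y⟫ := (real_inner_comm (A x) y).trans (hsa x y)
      rw [h1, real_inner_comm y x]
    have hpol : ∀ x y, 4 * ⟪x, S y⟫ ≤ 2 * η * (‖x‖^2 + ‖y‖^2) := by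
      intro x y
      have hs1 := (abs_le.mp (hquad (x + y))).2
      have hs2 := (abs_le.mp (hquad (x - y))).1
      have e1 : S (x + y) = S x + S y := by
        simp only [hSdef, map_add]; module
      have e2 : S (x - y) = S x - S y := by
        simp only [hSdef, map_sub]; module
      have hexp : ⟪x + y, S (x + y)⟫ - ⟪x - y, S (x - y)⟫ = 4 * ⟪x, S y⟫ := by
        rw [e1, e2]
        simp only [inner_add_left, inner_add_right, inner_sub_left, inner_sub_right]
        linear_combination 2 * hSsym x y
      have hpar : ‖x + y‖^2 + ‖x - y‖^2 = 2 * (‖x‖^2 + ‖y‖^2) := by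
        rw [norm_add_sq_real, norm_sub_sq_real]; ring
      nlinarith [hη0, hs1, hs2]
    show ‖S v‖ ≤ η * ‖v‖
    by_cases hv : v = 0
    · have : S v = 0 := by
        rw [hv]
        show (0:EuclideanSpace ℝ (Fin d)) - (2 / (Λ + m)) • A 0 = 0
        rw [map_zero, smul_zero, sub_zero]
      rw [this, hv]
      simp
    · by_cases hSv : S v = 0
      · rw [hSv, norm_zero]
        positivity
      · have hSvn : (0:ℝ) < ‖S v‖ := norm_pos_iff.mpr hSv
        have hvn : (0:ℝ) < ‖v‖ := norm_pos_iff.mpr hv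
        set y := (‖v‖ / ‖S v‖) • S v with hy
        have hyn : ‖y‖ = ‖v‖ := by
          rw [hy, norm_smul, Real.norm_eq_abs, abs_of_nonneg (by positivity)]
          field_simp
        have hSy : S y = (‖v‖ / ‖S v‖) • S (S v) := by
          simp only [hy, hSdef, map_smul]; module
        have hinner : ⟪v, S y⟫ = ‖v‖ * ‖S v‖ := by
          rw [hSy, real_inner_smul_right, hSsym (S v) v, real_inner_self_eq_norm_sq]
          field_simp
        have := hpol v y
        rw [hinner, hyn] at this
        have h4 : 4 * ‖v‖ * ‖S v‖ ≤ 4 * ‖v‖ * (η * ‖v‖) := by nlinarith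
        exact le_of_mul_le_mul_left (by linarith) (by positivity : (0:ℝ) < 4 * ‖v‖)
  -- one step contraction
  have hstep : ∀ x, ‖T x - νs‖ ≤ η * ‖x - νs‖ := by
    intro x
    have hTx : T x - νs = proj (x - (1 / (Λ + m)) • ((2:ℝ) • A x + (2:ℝ) • b))
        - proj (νs - (1 / (Λ + m)) • ((2:ℝ) • A νs + (2:ℝ) • b)) := by
      rw [hT x, hfix]
    rw [hTx]
    calc _ ≤ ‖(x - (1 / (Λ + m)) • ((2:ℝ) • A x + (2:ℝ) • b))
        - (νs - (1 / (Λ + m)) • ((2:ℝ) • A νs + (2:ℝ) • b))‖ := hne _ _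
      _ = ‖(x - νs) - (2 / (Λ + m)) • A (x - νs)‖ := by
          congr 1
          rw [map_sub]
          module
      _ ≤ η * ‖x - νs‖ := hS _
  -- induction
  intro ν ℓ
  induction ℓ with
  | zero => simp
  | succ n ih =>
    rw [Function.iterate_succ_apply']
    calc ‖T (T^[n] ν) - νs‖ ≤ η * ‖T^[n] ν - νs‖ := hstep _
      _ ≤ η * (η ^ n * ‖ν - νs‖) := by
          apply mul_le_mul_of_nonneg_left ih hη0
      _ = η ^ (n+1) * ‖ν - νs‖ := by ring
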